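/- Let d > 1 be squarefree, O = O(d) the ring of integers of ℚ(√d), and let u ∈ O be such that the norm N(u) = n³ is a cube, u is not a cube in O, and no cube p³ of a rational prime divides u in O. Then the principal ideal (u) factors as (u) = 𝔄³ · q · 𝔔, where 𝔄 and 𝔔 are ideals of O, q is a squarefree positive integer with q = N(𝔔), and every rational prime dividing q splits in O. -/

import Mathlib

section AuxAll

open Ideal Polynomial

set_option linter.unusedSectionVars false

section Aux

variable {S : Type*} [CommRing S] [IsDomain S] [IsDedekindDomain S]
  [Module.Free ℤ S] [Module.Finite ℤ S]

/-- a prime ideal divides some rational prime, and has prime-power norm -/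
lemma aux_prime_norm (P : Ideal S) (hP : Prime P) :
    ∃ p f : ℕ, p.Prime ∧ Ideal.absNorm P = p ^ f ∧ P ∣ Ideal.span {(p : S)} := by
  have hPbot : P ≠ ⊥ := by simpa using hP.ne_zero
  have hPprime : P.IsPrime := (Ideal.prime_iff_isPrime hPbot).mp hP
  have hmax : P.IsMaximal := hPprime.isMaximal hPbot
  have hNnz : Ideal.absNorm P ≠ 0 := by
    rw [Ne, Ideal.absNorm_eq_zero_iff]; exact hPbot
  have hfin : Finite (S ⧸ P) := (Ideal.absNorm_ne_zero_iff P).mp hNnz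
  letI : Field (S ⧸ P) := Ideal.Quotient.field P
  letI : Fintype (S ⧸ P) := Fintype.ofFinite _
  obtain ⟨p, _, n, hp, hcard⟩ := FiniteField.card' (S ⧸ P)
  have hcard' : Ideal.absNorm P = p ^ (n : ℕ) := by
    rw [Ideal.absNorm_apply, Submodule.cardQuot_apply, Nat.card_eq_fintype_card, hcard]
  refine ⟨p, n, hp, hcard', ?_⟩
  rw [Ideal.dvd_span_singleton]
  have hzero : ((Fintype.card (S ⧸ P) : ℕ) : S ⧸ P) = 0 := FiniteField.cast_card_eq_zero _
  rw [hcard] at hzero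
  push_cast at hzero
  have hpz : ((p : ℕ) : S ⧸ P) = 0 :=
    (pow_eq_zero_iff (n.pos.ne' : (n : ℕ) ≠ 0)).mp hzero
  rwa [← map_natCast (Ideal.Quotient.mk P), Ideal.Quotient.eq_zero_iff_mem] at hpz

/-- if no prime ideal above p divides J, then p does not divide the norm of J -/
lemma aux_not_dvd_norm {p : ℕ} (hp : p.Prime) {J : Ideal S} (hJ : J ≠ ⊥)
    (h : ∀ P : Ideal S, Prime P → P ∣ J → ¬ P ∣ Ideal.span {(p : S)}) :
    ¬ p ∣ Ideal.absNorm J := by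
  intro hdvd
  have hprod : (UniqueFactorizationMonoid.normalizedFactors J).prod = J :=
    associated_iff_eq.mp (UniqueFactorizationMonoid.prod_normalizedFactors hJ)
  have : Ideal.absNorm J =
      ((UniqueFactorizationMonoid.normalizedFactors J).map Ideal.absNorm).prod := by
    conv_lhs => rw [← hprod]
    rw [map_multiset_prod]
  rw [this] at hdvd
  obtain ⟨m, hm, hpm⟩ := hp.prime.exists_mem_multiset_dvd hdvd
  obtain ⟨P, hPmem, rfl⟩ := Multiset.mem_map.mp hm
  have hPprime : Prime P := UniqueFactorizationMonoid.prime_of_normalized_factor P hPmem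
  obtain ⟨l, f, hl, hnorm, hdvdl⟩ := aux_prime_norm P hPprime
  rw [hnorm] at hpm
  have : p = l := (Nat.prime_dvd_prime_iff_eq hp hl).mp (hp.dvd_of_dvd_pow hpm)
  subst this
  exact h P hPprime (UniqueFactorizationMonoid.dvd_of_mem_normalizedFactors hPmem) hdvdl

/-- factorization of (p) in a quadratic ring: inert, or product of two norm-p primes -/
lemma aux_factor_p {p : ℕ} (hp : p.Prime)
    (h2 : Ideal.absNorm (Ideal.span {(p : S)}) = p ^ 2) :
    Prime (Ideal.span {(p : S)}) ∨
    ∃ P₁ P₂ : Ideal S, Prime P₁ ∧ Prime P₂ ∧ Ideal.absNorm P₁ = p ∧ Ideal.absNorm P₂ = p ∧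
      Ideal.span {(p : S)} = P₁ * P₂ := by
  set I := Ideal.span {(p : S)} with hI
  have hIbot : I ≠ ⊥ := by
    intro h; rw [h, Ideal.absNorm_bot] at h2
    exact pow_ne_zero 2 hp.pos.ne' h2.symm
  have hInotunit : ¬ IsUnit I := by
    intro h
    rw [Ideal.isUnit_iff] at h
    rw [h, Ideal.absNorm_top] at h2
    have := hp.one_lt; nlinarith
  have hprod : (UniqueFactorizationMonoid.normalizedFactors I).prod = I :=
    associated_iff_eq.mp (UniqueFactorizationMonoid.prod_normalizedFactors hIbot)
  have hnormprod : ((UniqueFactorizationMonoid.normalizedFactors I).map Ideal.absNorm).prod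
      = p ^ 2 := by
    rw [Multiset.prod_hom _ Ideal.absNorm, hprod, h2]
  have hmemnorm : ∀ P ∈ UniqueFactorizationMonoid.normalizedFactors I,
      p ≤ Ideal.absNorm P := by
    intro P hP
    have hPprime := UniqueFactorizationMonoid.prime_of_normalized_factor P hP
    obtain ⟨l, f, hl, hn, hdl⟩ := aux_prime_norm P hPprime
    have : Ideal.absNorm P ∣ p ^ 2 := by
      rw [← h2]
      exact Ideal.absNorm_dvd_absNorm_of_le
        (Ideal.le_of_dvd (UniqueFactorizationMonoid.dvd_of_mem_normalizedFactors hP))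
    have hne1 : Ideal.absNorm P ≠ 1 := by
      rw [Ne, Ideal.absNorm_eq_one_iff, ← Ideal.one_eq_top]
      exact hPprime.ne_one
    obtain ⟨k, hk, hkk⟩ := (Nat.dvd_prime_pow hp).mp this
    rcases Nat.lt_or_ge k 1 with h | h
    · interval_cases k
      rw [pow_zero] at hkk
      exact absurd hkk hne1
    · calc p = p ^ 1 := (pow_one p).symm
        _ ≤ p ^ k := Nat.pow_le_pow_right hp.pos h
        _ = Ideal.absNorm P := hkk.symm
  have hcardle : Multiset.card (UniqueFactorizationMonoid.normalizedFactors I) ≤ 2 := by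
    by_contra h
    push_neg at h
    have hle : p ^ Multiset.card ((UniqueFactorizationMonoid.normalizedFactors I).map Ideal.absNorm)
        ≤ ((UniqueFactorizationMonoid.normalizedFactors I).map Ideal.absNorm).prod := by
      apply Multiset.pow_card_le_prod
      intro x hx
      obtain ⟨P, hP, rfl⟩ := Multiset.mem_map.mp hx
      exact hmemnorm P hP
    rw [hnormprod, Multiset.card_map] at hle
    have := Nat.pow_le_pow_iff_right hp.one_lt |>.mp hle
    omega
  have hfne : UniqueFactorizationMonoid.normalizedFactors I ≠ 0 := by
    intro h0
    rw [h0, Multiset.prod_zero] at hprod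
    exact hInotunit (hprod ▸ isUnit_one)
  have hcardpos : 0 < Multiset.card (UniqueFactorizationMonoid.normalizedFactors I) :=
    Multiset.card_pos.mpr hfne
  interval_cases hcard : Multiset.card (UniqueFactorizationMonoid.normalizedFactors I)
  · -- card = 1 : inert
    obtain ⟨P, hP⟩ := Multiset.card_eq_one.mp hcard
    left
    have : I = P := by rw [← hprod, hP, Multiset.prod_singleton]
    rw [this]
    exact UniqueFactorizationMonoid.prime_of_normalized_factor P (by rw [hP]; simp)
  · -- card = 2
    obtain ⟨P₁, P₂, hP⟩ := Multiset.card_eq_two.mp hcard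
    right
    have h1 : Prime P₁ := UniqueFactorizationMonoid.prime_of_normalized_factor P₁
      (by rw [hP]; simp)
    have h2' : Prime P₂ := UniqueFactorizationMonoid.prime_of_normalized_factor P₂
      (by rw [hP]; simp)
    have hIeq : I = P₁ * P₂ := by
      rw [← hprod, hP]; simp [Multiset.prod_cons]
    have hnn : Ideal.absNorm P₁ * Ideal.absNorm P₂ = p ^ 2 := by
      rw [← _root_.map_mul Ideal.absNorm, ← hIeq]
      exact h2
    have hp1 : p ≤ Ideal.absNorm P₁ := hmemnorm P₁ (by rw [hP]; simp)
    have hp2 : p ≤ Ideal.absNorm P₂ := hmemnorm P₂ (by rw [hP]; simp)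
    have he1 : Ideal.absNorm P₁ = p := by nlinarith [hp.pos]
    have he2 : Ideal.absNorm P₂ = p := by nlinarith [hp.pos]
    exact ⟨P₁, P₂, h1, h2', he1, he2, hIeq⟩

lemma aux_extract {P I : Ideal S} (hP : Prime P) (hI : I ≠ ⊥) :
    ∃ a : ℕ, ∃ J : Ideal S, I = P ^ a * J ∧ ¬ P ∣ J := by
  have hfin : FiniteMultiplicity P I := FiniteMultiplicity.of_prime_left hP hI
  obtain ⟨J, hJ, hnd⟩ := hfin.exists_eq_pow_mul_and_not_dvd
  exact ⟨_, J, hJ, hnd⟩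

lemma aux_prime_dvd_prime {P Q : Ideal S} (hP : Prime P) (hQ : Prime Q) (h : P ∣ Q) : P = Q :=
  associated_iff_eq.mp (hP.associated_of_dvd hQ h)

/-- the split case combination step -/
lemma aux_split_case {p q' : ℕ} (hp : p.Prime) {P₁ P₂ A' Q' J : Ideal S} {a b : ℕ}
    (h₁ : Prime P₁) (h₂ : Prime P₂) (hne : P₁ ≠ P₂)
    (hn₁ : Ideal.absNorm P₁ = p) (hn₂ : Ideal.absNorm P₂ = p)
    (hsp : Ideal.span {(p : S)} = P₁ * P₂)
    (hab : 3 ∣ a + b) (ha2 : a ≤ 2) (hle : a ≤ b)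
    (hq' : Ideal.absNorm Q' = q') (hsq : Squarefree q') (hpq' : ¬ p ∣ q')
    (hsplit' : ∀ l : ℕ, l.Prime → l ∣ q' → ∃ R₁ R₂ : Ideal S, R₁.IsPrime ∧ R₂.IsPrime ∧
      R₁ ≠ R₂ ∧ Ideal.span {(l : S)} = R₁ * R₂)
    (hJ : J = A' ^ 3 * Ideal.span {((q' : ℕ) : S)} * Q') :
    ∃ (A Q : Ideal S) (q : ℕ), Squarefree q ∧ Ideal.absNorm Q = q ∧
      (∀ l : ℕ, l.Prime → l ∣ q → ∃ R₁ R₂ : Ideal S, R₁.IsPrime ∧ R₂.IsPrime ∧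
        R₁ ≠ R₂ ∧ Ideal.span {(l : S)} = R₁ * R₂) ∧
      P₁ ^ a * P₂ ^ b * J = A ^ 3 * Ideal.span {((q : ℕ) : S)} * Q := by
  have hP₁isp : P₁.IsPrime := (Ideal.prime_iff_isPrime (by simpa using h₁.ne_zero)).mp h₁
  have hP₂isp : P₂.IsPrime := (Ideal.prime_iff_isPrime (by simpa using h₂.ne_zero)).mp h₂
  have hsqpq : Squarefree (p * q') :=
    Nat.squarefree_mul ((Nat.Prime.coprime_iff_not_dvd hp).mpr hpq')
      |>.mpr ⟨hp.prime.squarefree, hsq⟩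
  have hsplitpq : ∀ l : ℕ, l.Prime → l ∣ p * q' → ∃ R₁ R₂ : Ideal S, R₁.IsPrime ∧ R₂.IsPrime ∧
      R₁ ≠ R₂ ∧ Ideal.span {(l : S)} = R₁ * R₂ := by
    intro l hl hldvd
    rcases (Nat.Prime.dvd_mul hl).mp hldvd with h | h
    · rw [(Nat.prime_dvd_prime_iff_eq hl hp).mp h]
      exact ⟨P₁, P₂, hP₁isp, hP₂isp, hne, hsp⟩
    · exact hsplit' l hl h
  have hspanmul : Ideal.span {(((p * q' : ℕ)) : S)} =
      Ideal.span {(p : S)} * Ideal.span {((q' : ℕ) : S)} := by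
    rw [Ideal.span_singleton_mul_span_singleton]
    push_cast
    rfl
  interval_cases a
  · -- a = 0
    obtain ⟨k, hk⟩ := hab
    have hk' : b = 3 * k := by omega
    refine ⟨P₂ ^ k * A', Q', q', hsq, hq', hsplit', ?_⟩
    rw [hJ, hk']
    ring
  · -- a = 1
    obtain ⟨k, hk⟩ : ∃ k, b = 3 * k + 2 := ⟨b / 3, by omega⟩
    refine ⟨P₂ ^ k * A', P₂ * Q', p * q', hsqpq, by rw [_root_.map_mul, hn₂, hq'], hsplitpq, ?_⟩
    rw [hJ, hspanmul, hsp, hk]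
    ring
  · -- a = 2
    obtain ⟨k, hk⟩ : ∃ k, b = 3 * k + 1 := ⟨b / 3, by omega⟩
    refine ⟨P₂ ^ k * A', P₁ * Q', p * q', hsqpq, by rw [_root_.map_mul, hn₁, hq'], hsplitpq, ?_⟩
    rw [hJ, hspanmul, hsp, hk]
    ring

lemma aux_fact {p e m : ℕ} (hp : p.Prime) (hm : m ≠ 0) (hpm : ¬ p ∣ m) :
    (p ^ e * m).factorization p = e := by
  rw [Nat.factorization_mul (pow_ne_zero e hp.pos.ne') hm, Finsupp.add_apply,
    hp.factorization_pow, Finsupp.single_eq_same,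
    Nat.factorization_eq_zero_of_not_dvd hpm, add_zero]

lemma aux_core (h2 : ∀ p : ℕ, p.Prime → Ideal.absNorm (Ideal.span {(p : S)}) = p ^ 2) :
    ∀ N : ℕ, ∀ I : Ideal S, Ideal.absNorm I = N → I ≠ ⊥ →
    (∀ l : ℕ, l.Prime → 3 ∣ N.factorization l) →
    (∀ p : ℕ, p.Prime → ¬ (Ideal.span {(p : S)} ^ 3 ∣ I)) →
    ∃ (A Q : Ideal S) (q : ℕ), Squarefree q ∧ Ideal.absNorm Q = q ∧
      (∀ l : ℕ, l.Prime → l ∣ q → ∃ R₁ R₂ : Ideal S, R₁.IsPrime ∧ R₂.IsPrime ∧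
        R₁ ≠ R₂ ∧ Ideal.span {(l : S)} = R₁ * R₂) ∧
      I = A ^ 3 * Ideal.span {((q : ℕ) : S)} * Q := by
  intro N
  induction N using Nat.strong_induction_on with
  | _ N IH =>
  intro I hIN hIbot hcube hnc
  by_cases hItop : I = ⊤
  · refine ⟨⊤, ⊤, 1, squarefree_one, Ideal.absNorm_top,
      fun l hl hdvd => absurd (Nat.dvd_one.mp hdvd) hl.ne_one, ?_⟩
    simp [hItop, Ideal.span_singleton_one, Ideal.top_pow]
  obtain ⟨P, hPmax, hIleP⟩ := Ideal.exists_le_maximal I hItop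
  have hPbot : P ≠ ⊥ := fun h => hIbot (le_bot_iff.mp (h ▸ hIleP))
  have hPprime : Prime P := (Ideal.prime_iff_isPrime hPbot).mpr hPmax.isPrime
  have hPdvdI : P ∣ I := Ideal.dvd_iff_le.mpr hIleP
  obtain ⟨p, f, hp, hPnorm, hPdvdp⟩ := aux_prime_norm P hPprime
  have hsp2 := h2 p hp
  have hN0 : N ≠ 0 := by
    rw [← hIN, Ne, Ideal.absNorm_eq_zero_iff]; exact hIbot
  -- the recursion helper
  have hrec : ∀ (J : Ideal S) (e : ℕ), J ∣ I → N = p ^ e * Ideal.absNorm J → 1 ≤ e →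
      ¬ p ∣ Ideal.absNorm J →
      ∃ (A Q : Ideal S) (q : ℕ), Squarefree q ∧ Ideal.absNorm Q = q ∧
        (∀ l : ℕ, l.Prime → l ∣ q → ∃ R₁ R₂ : Ideal S, R₁.IsPrime ∧ R₂.IsPrime ∧
          R₁ ≠ R₂ ∧ Ideal.span {(l : S)} = R₁ * R₂) ∧
        J = A ^ 3 * Ideal.span {((q : ℕ) : S)} * Q := by
    intro J e hJI hNe he hpNJ
    have hJbot : J ≠ ⊥ := by
      rintro rfl
      obtain ⟨c, hc⟩ := hJI
      exact hIbot (by rw [hc]; simp)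
    have hNJ0 : Ideal.absNorm J ≠ 0 := by
      rw [Ne, Ideal.absNorm_eq_zero_iff]; exact hJbot
    have hlt : Ideal.absNorm J < N := by
      rw [hNe]
      calc Ideal.absNorm J = 1 * Ideal.absNorm J := (one_mul _).symm
        _ < p ^ e * Ideal.absNorm J := by
            exact (Nat.mul_lt_mul_right (Nat.pos_of_ne_zero hNJ0)).mpr
              (Nat.one_lt_pow (by omega) hp.one_lt)
    have hcube' : ∀ l : ℕ, l.Prime → 3 ∣ (Ideal.absNorm J).factorization l := by
      intro l hl
      rcases eq_or_ne l p with rfl | hlp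
      · rw [Nat.factorization_eq_zero_of_not_dvd hpNJ]
        exact dvd_zero 3
      · have hc := hcube l hl
        rw [hNe, Nat.factorization_mul (pow_ne_zero e hp.pos.ne') hNJ0, Finsupp.add_apply,
          hp.factorization_pow, Finsupp.single_apply, if_neg (fun h => hlp h.symm),
          zero_add] at hc
        exact hc
    exact IH (Ideal.absNorm J) hlt J rfl hJbot hcube'
      (fun l hl hdvd => hnc l hl (hdvd.trans hJI))
  rcases aux_factor_p hp hsp2 with hinert | ⟨P₁, P₂, h₁, h₂, hn₁, hn₂, hsp⟩
  · -- inert case: impossible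
    exfalso
    have hPeq : P = Ideal.span {(p : S)} := aux_prime_dvd_prime hPprime hinert hPdvdp
    obtain ⟨a, J, hIa, hPJ⟩ := aux_extract hPprime hIbot
    have ha1 : 1 ≤ a := by
      by_contra h
      push_neg at h
      interval_cases a
      rw [pow_zero, one_mul] at hIa
      exact hPJ (hIa ▸ hPdvdI)
    have hJbot : J ≠ ⊥ := by
      rintro rfl
      exact hIbot (by rw [hIa]; simp)
    have hNJ0 : Ideal.absNorm J ≠ 0 := by
      rw [Ne, Ideal.absNorm_eq_zero_iff]; exact hJbot
    have hpJ : ¬ p ∣ Ideal.absNorm J :=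
      aux_not_dvd_norm hp hJbot (fun P' hP' hP'J hP'p =>
        hPJ (((aux_prime_dvd_prime hP' hinert hP'p).trans hPeq.symm) ▸ hP'J))
    have hNval : N = p ^ (2 * a) * Ideal.absNorm J := by
      rw [← hIN, hIa, _root_.map_mul, map_pow, hPeq, hsp2, ← pow_mul]
    have h3 : 3 ∣ 2 * a := by
      have := hcube p hp
      rwa [hNval, aux_fact hp hNJ0 hpJ] at this
    have h3a : 3 ≤ a := by omega
    exact hnc p hp (by
      rw [← hPeq]
      exact dvd_trans (pow_dvd_pow P h3a) ⟨J, hIa⟩)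
  · by_cases hPP : P₁ = P₂
    · -- ramified case
      subst hPP
      obtain ⟨a, J, hIa, hPJ⟩ := aux_extract h₁ hIbot
      have hPeq : P = P₁ :=
        aux_prime_dvd_prime hPprime h₁ ((hPprime.dvd_mul.mp (hsp ▸ hPdvdp)).elim id id)
      have ha1 : 1 ≤ a := by
        by_contra h
        push_neg at h
        interval_cases a
        rw [pow_zero, one_mul] at hIa
        exact hPJ (hIa ▸ hPeq ▸ hPdvdI)
      have hJbot : J ≠ ⊥ := by
        rintro rfl
        exact hIbot (by rw [hIa]; simp)
      have hNJ0 : Ideal.absNorm J ≠ 0 := by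
        rw [Ne, Ideal.absNorm_eq_zero_iff]; exact hJbot
      have hpJ : ¬ p ∣ Ideal.absNorm J :=
        aux_not_dvd_norm hp hJbot (fun P' hP' hP'J hP'p =>
          hPJ ((aux_prime_dvd_prime hP' h₁ ((hP'.dvd_mul.mp (hsp ▸ hP'p)).elim id id)) ▸ hP'J))
      have hNval : N = p ^ a * Ideal.absNorm J := by
        rw [← hIN, hIa, _root_.map_mul, map_pow, hn₁]
      have h3 : 3 ∣ a := by
        have := hcube p hp
        rwa [hNval, aux_fact hp hNJ0 hpJ] at this
      have ha5 : a ≤ 5 := by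
        by_contra h
        push_neg at h
        refine hnc p hp ?_
        rw [hsp]
        calc (P₁ * P₁) ^ 3 = P₁ ^ 6 := by ring
          _ ∣ P₁ ^ a := pow_dvd_pow P₁ (by omega)
          _ ∣ I := ⟨J, hIa⟩
      have ha3 : a = 3 := by omega
      subst ha3
      obtain ⟨A', Q', q', hsq', hq', hsplit', hJ⟩ :=
        hrec J 3 ⟨P₁ ^ 3, by rw [hIa]; ring⟩ hNval (by omega) hpJ
      exact ⟨P₁ * A', Q', q', hsq', hq', hsplit', by rw [hIa, hJ]; ring⟩
    · -- split case
      obtain ⟨a, J₁, hIa, hP₁J₁⟩ := aux_extract h₁ hIbot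
      have hJ₁bot : J₁ ≠ ⊥ := by
        rintro rfl
        exact hIbot (by rw [hIa]; simp)
      obtain ⟨b, J, hJ₁b, hP₂J⟩ := aux_extract h₂ hJ₁bot
      have hIab : I = P₁ ^ a * P₂ ^ b * J := by rw [hIa, hJ₁b]; ring
      have hJbot : J ≠ ⊥ := by
        rintro rfl
        exact hIbot (by rw [hIab]; simp)
      have hNJ0 : Ideal.absNorm J ≠ 0 := by
        rw [Ne, Ideal.absNorm_eq_zero_iff]; exact hJbot
      have hP₁J : ¬ P₁ ∣ J := fun h => hP₁J₁ (hJ₁b ▸ h.mul_left (P₂ ^ b))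
      have hpJ : ¬ p ∣ Ideal.absNorm J :=
        aux_not_dvd_norm hp hJbot (fun P' hP' hP'J hP'p => by
          rcases hP'.dvd_mul.mp (hsp ▸ hP'p) with h | h
          · exact hP₁J ((aux_prime_dvd_prime hP' h₁ h) ▸ hP'J)
          · exact hP₂J ((aux_prime_dvd_prime hP' h₂ h) ▸ hP'J))
      have hNval : N = p ^ (a + b) * Ideal.absNorm J := by
        rw [← hIN, hIab, _root_.map_mul, _root_.map_mul, map_pow, map_pow, hn₁, hn₂, ← pow_add]
      have h3 : 3 ∣ a + b := by
        have := hcube p hp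
        rwa [hNval, aux_fact hp hNJ0 hpJ] at this
      have hmin : a ≤ 2 ∨ b ≤ 2 := by
        by_contra h
        push_neg at h
        refine hnc p hp ?_
        rw [hsp, mul_pow]
        exact dvd_trans
          (mul_dvd_mul (pow_dvd_pow P₁ (by omega)) (pow_dvd_pow P₂ (by omega)))
          ⟨J, hIab⟩
      have hab1 : 1 ≤ a + b := by
        by_contra h
        push_neg at h
        have ha0 : a = 0 := by omega
        have hb0 : b = 0 := by omega
        subst ha0; subst hb0
        have hIJ : I = J := by simpa using hIab
        rcases hPprime.dvd_mul.mp (hsp ▸ hPdvdp) with h' | h'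
        · exact hP₁J ((aux_prime_dvd_prime hPprime h₁ h') ▸ (hIJ ▸ hPdvdI))
        · exact hP₂J ((aux_prime_dvd_prime hPprime h₂ h') ▸ (hIJ ▸ hPdvdI))
      obtain ⟨A', Q', q', hsq', hq', hsplit', hJ⟩ :=
        hrec J (a + b) ⟨P₁ ^ a * P₂ ^ b, by rw [hIab]; ring⟩ hNval hab1 hpJ
      have hQ'J : Q' ∣ J := ⟨A' ^ 3 * Ideal.span {((q' : ℕ) : S)}, by rw [hJ]; ring⟩
      have hpq' : ¬ p ∣ q' := fun h =>
        hpJ (h.trans (hq' ▸ Ideal.absNorm_dvd_absNorm_of_le (Ideal.le_of_dvd hQ'J)))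
      rcases le_total a b with hab | hab
      · obtain ⟨A, Q, q, hq1, hq2, hq3, hq4⟩ :=
          aux_split_case hp h₁ h₂ hPP hn₁ hn₂ hsp h3 (by omega) hab hq' hsq' hpq' hsplit' hJ
        exact ⟨A, Q, q, hq1, hq2, hq3, by rw [hIab, hq4]⟩
      · obtain ⟨A, Q, q, hq1, hq2, hq3, hq4⟩ :=
          aux_split_case hp h₂ h₁ (Ne.symm hPP) hn₂ hn₁ (by rw [hsp, mul_comm])
            (by rwa [Nat.add_comm] at h3) (by omega) hab hq' hsq' hpq' hsplit' hJ
        refine ⟨A, Q, q, hq1, hq2, hq3, ?_⟩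
        rw [hIab, ← hq4]
        ring

end Aux

open NumberField

lemma aux_no_rat_sqrt {d : ℤ} (hd : 1 < d) (hsf : Squarefree d) (b : ℚ) : b ^ 2 ≠ (d : ℚ) := by
  intro hb
  have hint : IsIntegral ℤ b := by
    refine ⟨X ^ 2 - C d, monic_X_pow_sub_C d two_ne_zero, ?_⟩
    simp only [eval₂_sub, eval₂_pow, eval₂_X, eval₂_C, hb]
    simp
  obtain ⟨y, hy⟩ := IsIntegrallyClosed.isIntegral_iff.mp hint
  have hyq : ((y : ℚ)) ^ 2 = ((d : ℚ)) := by
    rw [show ((y : ℚ)) = b from by rw [← hy]; simp]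
    exact hb
  have hyd : y ^ 2 = d := by exact_mod_cast hyq
  have hu : IsUnit y := hsf y ⟨1, by rw [← hyd]; ring⟩
  have h1 : y = 1 ∨ y = -1 := Int.isUnit_iff.mp hu
  have : d = 1 := by rcases h1 with rfl | rfl <;> simpa using hyd.symm
  omega

lemma aux_finrank {d : ℤ} (hd : 1 < d) (hsf : Squarefree d)
    (K : Type*) [Field K] [NumberField K] (ιK : K →ₐ[ℚ] ℂ)
    (hK : ιK.fieldRange = IntermediateField.adjoin ℚ {((Real.sqrt d : ℝ) : ℂ)}) :
    Module.finrank ℚ K = 2 := by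
  set α : ℂ := ((Real.sqrt d : ℝ) : ℂ) with hαdef
  have hdR : (0 : ℝ) ≤ (d : ℝ) := by exact_mod_cast (by omega : (0:ℤ) ≤ d)
  have hα2 : α ^ 2 = algebraMap ℚ ℂ ((d : ℚ)) := by
    rw [hαdef, ← Complex.ofReal_pow, Real.sq_sqrt hdR]
    simp
  have hmonic : (X ^ 2 - C ((d : ℚ))).Monic := monic_X_pow_sub_C _ two_ne_zero
  have hirr : Irreducible (X ^ 2 - C ((d : ℚ))) :=
    X_pow_sub_C_irreducible_of_prime Nat.prime_two (fun b => aux_no_rat_sqrt hd hsf b)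
  have haev : Polynomial.aeval α (X ^ 2 - C ((d : ℚ))) = 0 := by
    rw [map_sub, map_pow, aeval_X, aeval_C, hα2, sub_self]
  have hint : IsIntegral ℚ α := ⟨_, hmonic, haev⟩
  have hmin : minpoly ℚ α = X ^ 2 - C ((d : ℚ)) :=
    (minpoly.eq_of_irreducible_of_monic hirr haev hmonic).symm
  have h1 : Module.finrank ℚ (IntermediateField.adjoin ℚ {α}) = 2 := by
    have := IntermediateField.adjoin.finrank hint
    rw [hmin, natDegree_X_pow_sub_C] at this
    exact this
  calc Module.finrank ℚ K = Module.finrank ℚ ιK.range :=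
        (AlgEquiv.ofInjectiveField ιK).toLinearEquiv.finrank_eq
    _ = Module.finrank ℚ ιK.fieldRange := by
        rw [← AlgHom.fieldRange_toSubalgebra]
        exact ιK.fieldRange.finrank_eq_finrank_subalgebra
    _ = 2 := by rw [hK]; exact h1

lemma aux_norm_span_p (K : Type*) [Field K] [NumberField K] (hrank : Module.finrank ℚ K = 2)
    (p : ℕ) :
    Ideal.absNorm (Ideal.span {(p : 𝓞 K)}) = p ^ 2 := by
  rw [Ideal.absNorm_span_singleton]
  have hcast : ((p : ℕ) : 𝓞 K) = algebraMap ℤ (𝓞 K) ((p : ℤ)) :=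
    (map_natCast (algebraMap ℤ (𝓞 K)) p).symm
  rw [hcast, Algebra.norm_algebraMap_of_basis (Module.Free.chooseBasis ℤ (𝓞 K))]
  rw [← Module.finrank_eq_card_chooseBasisIndex, RingOfIntegers.rank, hrank]
  simp [Int.natAbs_pow]

end AuxAll

open NumberField

/-- let `K = ℚ(√d)` with ring of integers `O = 𝓞 K`, and `u ∈ O` with
cubic norm `n³`, `u` not a cube in `O`, and not divisible by the cube of any rational
prime. Then `(u) = 𝔄³ · (q) · 𝔔` with `q` squarefree, `q = N(𝔔)`, and every rational
prime dividing `q` splits in `O`. -/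
theorem stmt_16 (d : ℤ) (hd : 1 < d) (hsf : Squarefree d)
    (K : Type*) [Field K] [NumberField K] (ιK : K →ₐ[ℚ] ℂ)
    (hK : ιK.fieldRange = IntermediateField.adjoin ℚ {((Real.sqrt d : ℝ) : ℂ)})
    (u : 𝓞 K) (n : ℤ) (hnorm : Algebra.norm ℤ u = n ^ 3)
    (hnotcube : ¬∃ w : 𝓞 K, u = w ^ 3)
    (hnocubediv : ∀ p : ℕ, p.Prime → ¬((p : 𝓞 K) ^ 3 ∣ u)) :
    ∃ (A Q : Ideal (𝓞 K)) (q : ℕ), Squarefree q ∧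
      Ideal.absNorm Q = q ∧
      (∀ p : ℕ, p.Prime → p ∣ q →
        ∃ P₁ P₂ : Ideal (𝓞 K), P₁.IsPrime ∧ P₂.IsPrime ∧ P₁ ≠ P₂ ∧
          Ideal.span {(p : 𝓞 K)} = P₁ * P₂) ∧
      Ideal.span {u} = A ^ 3 * Ideal.span {(q : 𝓞 K)} * Q := by
  have hrank := aux_finrank hd hsf K ιK hK
  have hu0 : u ≠ 0 := by
    rintro rfl
    exact hnocubediv 2 Nat.prime_two (dvd_zero _)
  have hIbot : Ideal.span {u} ≠ ⊥ := by rwa [Ne, Ideal.span_singleton_eq_bot]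
  have hcube : ∀ l : ℕ, l.Prime → 3 ∣ (Ideal.absNorm (Ideal.span {u})).factorization l := by
    intro l hl
    rw [Ideal.absNorm_span_singleton, hnorm, Int.natAbs_pow, Nat.factorization_pow,
      Finsupp.smul_apply, smul_eq_mul]
    exact dvd_mul_right 3 _
  have hnc : ∀ p : ℕ, p.Prime → ¬ (Ideal.span {(p : 𝓞 K)} ^ 3 ∣ Ideal.span {u}) := by
    intro p hp hdvd
    refine hnocubediv p hp ?_
    rw [Ideal.span_singleton_pow] at hdvd
    exact Ideal.mem_span_singleton.mp
      (Ideal.le_of_dvd hdvd (Ideal.mem_span_singleton_self u))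
  obtain ⟨A, Q, q, hq1, hq2, hq3, hq4⟩ :=
    aux_core (S := 𝓞 K) (fun p _ => aux_norm_span_p K hrank p)
      (Ideal.absNorm (Ideal.span {u})) (Ideal.span {u}) rfl hIbot hcube hnc
  exact ⟨A, Q, q, hq1, hq2, hq3, hq4⟩
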